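/- arXiv:2307.02481 — 3 statements merged into one kernel-verified Lean document; each statement's English description precedes it below -/
import Mathlib

section
/- Let N ≥ 2, ρ_L, ρ_R ∈ (0,1), and take ω_L = ω_R = 1, so that Q(J) = ∏_{i=1}^k (j_i − (i−1))/(N − (i−1)). Then for every n ≥ 1 and every 1 ≤ x_1 < … < x_n ≤ N−1, the n-point non-centered correlations of the explicit measure μ satisfy E_μ[∏_{i=1}^n η(x_i)] = Σ_{j=0}^n ρ_L^{n−j}(ρ_R−ρ_L)^j Σ_{1 ≤ i_1 < … < i_j ≤ n} ∏_{ℓ=1}^j (x_{i_ℓ} − (ℓ−1))/(N − (ℓ−1)), where E_μ[g] := Σ_{η ∈ {0,1}^{{1,…,N−1}}} μ(η) g(η). -/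
noncomputable def sepQ (N : ℕ) (ωL ωR : ℝ) (J : Finset ℕ) : ℝ :=
  (((J.sort (· ≤ ·)).zipIdx).map
    (fun p => (1 / ωL + (p.1 : ℝ) - ((p.2 : ℝ) + 1)) /
      (1 / ωL + 1 / ωR + (N : ℝ) - 1 - ((p.2 : ℝ) + 1)))).prod

noncomputable def sepF (N : ℕ) (ωL ωR : ℝ) (I : Finset ℕ) : ℝ :=
  ∑ J ∈ (Finset.Icc 1 (N - 1)).powerset.filter (fun J => I ⊆ J),
    (-1 : ℝ) ^ (J \ I).card * sepQ N ωL ωR J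

noncomputable def sepB (N : ℕ) (ρL ρR : ℝ) (I A : Finset ℕ) : ℝ :=
  (∏ x ∈ I, (if x ∈ A then ρR else 1 - ρR)) *
    (∏ x ∈ Finset.Icc 1 (N - 1) \ I, (if x ∈ A then ρL else 1 - ρL))

noncomputable def sepMu (N : ℕ) (ωL ωR ρL ρR : ℝ) (A : Finset ℕ) : ℝ :=
  ∑ I ∈ (Finset.Icc 1 (N - 1)).powerset, sepF N ωL ωR I * sepB N ρL ρR I A

noncomputable def occ (A : Finset ℕ) (x : ℕ) : ℝ := if x ∈ A then 1 else 0

noncomputable def sepGen (N : ℕ) (ωL ωR ρL ρR : ℝ) (f : Finset ℕ → ℝ) (A : Finset ℕ) : ℝ :=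
  (∑ x ∈ Finset.Icc 1 (N - 2),
      (occ A x * (1 - occ A (x + 1)) * (f (insert (x + 1) (A.erase x)) - f A) +
        occ A (x + 1) * (1 - occ A x) * (f (insert x (A.erase (x + 1))) - f A))) +
    ωL * (occ A 1 * (1 - ρL) * (f (A.erase 1) - f A) +
        ρL * (1 - occ A 1) * (f (insert 1 A) - f A)) +
    ωR * (occ A (N - 1) * (1 - ρR) * (f (A.erase (N - 1)) - f A) +
        ρR * (1 - occ A (N - 1)) * (f (insert (N - 1) A) - f A))

/-- Product over the increasingly sorted elements i_1 < … < i_j of s of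
(x_{i_ℓ} − (ℓ−1)) / (N − (ℓ−1))  (unit-conductance form). -/
noncomputable def idxProd (N n : ℕ) (x : Fin n → ℕ) (s : Finset (Fin n)) : ℝ :=
  ((s.sort (· ≤ ·)).zipIdx.map
    (fun p => ((x p.1 : ℝ) - (p.2 : ℝ)) / ((N : ℝ) - (p.2 : ℝ)))).prod

lemma sort_map_of_strictMono {n : ℕ} (x : Fin n → ℕ) (hx : StrictMono x) (s : Finset (Fin n)) :
    (s.map ⟨x, hx.injective⟩).sort (· ≤ ·) = (s.sort (· ≤ ·)).map x := by
  refine (fun hp h1 h2 => List.Perm.eq_of_pairwise' (r := (· ≤ ·)) h1 h2 hp) ?_ ?_ ?_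
  · rw [← Multiset.coe_eq_coe]
    simp [Finset.sort_eq, Finset.map_val, ← Multiset.map_coe]
  · exact Finset.pairwise_sort _ _
  · exact (List.Pairwise.map x (fun a b h => hx h) ((Finset.sortedLT_sort s).pairwise)).imp le_of_lt

lemma sepQ_map_eq (N : ℕ) {n : ℕ} (x : Fin n → ℕ) (hx : StrictMono x) (s : Finset (Fin n)) :
    sepQ N 1 1 (s.map ⟨x, hx.injective⟩) = idxProd N n x s := by
  unfold sepQ idxProd
  rw [sort_map_of_strictMono x hx, List.zipIdx_map, List.map_map]
  apply congrArg
  apply List.map_congr_left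
  intro p _
  simp only [Function.comp, Prod.map, id]
  norm_num
  congr 1 <;> ring

lemma prod_ite_subset {S A : Finset ℕ} (h : A ⊆ S) (p q : ℕ → ℝ) :
    ∏ y ∈ S, (if y ∈ A then p y else q y) = (∏ y ∈ A, p y) * ∏ y ∈ S \ A, q y := by
  classical
  have := Finset.prod_piecewise S A p q
  simp only [Finset.piecewise] at this
  rw [Finset.inter_eq_right.mpr h] at this
  convert this using 2

lemma sum_powerset_prod (S : Finset ℕ) (p q : ℕ → ℝ) :
    ∑ A ∈ S.powerset, ∏ y ∈ S, (if y ∈ A then p y else q y) = ∏ y ∈ S, (p y + q y) := by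
  rw [Finset.prod_add]
  refine Finset.sum_congr rfl fun A hA => ?_
  rw [prod_ite_subset (Finset.mem_powerset.1 hA)]

lemma alt_sum (J T : Finset ℕ) (ρL ρR : ℝ) :
    ∑ I ∈ J.powerset, (-1:ℝ)^((J\I).card) * ∏ y ∈ T, (if y ∈ I then ρR else ρL)
    = (∏ _y ∈ T \ J, ρL) * ∏ y ∈ J, (if y ∈ T then ρR - ρL else 0) := by
  classical
  set a : ℕ → ℝ := fun y => if y ∈ T then ρR else 1 with ha
  set b : ℕ → ℝ := fun y => if y ∈ T then ρL else 1 with hb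
  have key : ∀ I ∈ J.powerset,
      (-1:ℝ)^((J\I).card) * ∏ y ∈ T, (if y ∈ I then ρR else ρL)
      = (∏ _y ∈ T \ J, ρL) *
        ((∏ y ∈ I, a y) * ∏ y ∈ J \ I, (-(b y))) := by
    intro I hI
    rw [Finset.mem_powerset] at hI
    have h1 : ∏ y ∈ T, (if y ∈ I then ρR else ρL)
        = (∏ y ∈ T \ (T ∩ J), (if y ∈ I then ρR else ρL)) *
          ∏ y ∈ T ∩ J, (if y ∈ I then ρR else ρL) :=
      (Finset.prod_sdiff Finset.inter_subset_left).symm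
    have h2 : ∏ y ∈ T \ (T ∩ J), (if y ∈ I then ρR else ρL) = ∏ _y ∈ T \ J, ρL := by
      rw [Finset.sdiff_inter_self_left]
      refine Finset.prod_congr rfl fun y hy => ?_
      have : y ∉ I := fun h => (Finset.mem_sdiff.1 hy).2 (hI h)
      simp [this]
    have h3 : ∏ y ∈ T ∩ J, (if y ∈ I then ρR else ρL)
        = ∏ y ∈ J, (if y ∈ T then (if y ∈ I then ρR else ρL) else 1) := by
      rw [Finset.prod_congr rfl
        (fun y hy => by simp [(Finset.mem_inter.1 hy).1] :
          ∀ y ∈ T ∩ J, (if y ∈ I then ρR else ρL)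
            = (if y ∈ T then (if y ∈ I then ρR else ρL) else 1))]
      exact Finset.prod_subset Finset.inter_subset_right fun y hyJ hy => by
        have hT : y ∉ T := fun h => hy (Finset.mem_inter.2 ⟨h, hyJ⟩)
        simp [hT]
    have h4 : ∏ y ∈ J, (if y ∈ T then (if y ∈ I then ρR else ρL) else 1)
        = (∏ y ∈ I, a y) * ∏ y ∈ J \ I, b y := by
      rw [Finset.prod_congr rfl
        (fun y _ => by by_cases h1 : y ∈ T <;> by_cases h2 : y ∈ I <;> simp [ha, hb, h1, h2] :
          ∀ y ∈ J, (if y ∈ T then (if y ∈ I then ρR else ρL) else 1)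
            = (if y ∈ I then a y else b y))]
      exact prod_ite_subset hI a b
    have h5 : ∏ y ∈ J \ I, (-(b y)) = (-1:ℝ)^((J\I).card) * ∏ y ∈ J \ I, b y := by
      rw [show (fun y => -(b y)) = fun y => (-1) * b y from funext fun y => by ring]
      rw [Finset.prod_mul_distrib, Finset.prod_const]
    rw [h1, h2, h3, h4, h5]
    ring
  rw [Finset.sum_congr rfl key, ← Finset.mul_sum]
  congr 1
  rw [← Finset.prod_add a (fun y => -(b y)) J]
  refine Finset.prod_congr rfl fun y _ => ?_
  by_cases h : y ∈ T <;> simp [ha, hb, h] <;> ring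

lemma bernoulli_moment (S I T : Finset ℕ) (hI : I ⊆ S) (hT : T ⊆ S) (ρL ρR : ℝ) :
    ∑ A ∈ S.powerset,
      ((∏ y ∈ I, (if y ∈ A then ρR else 1 - ρR)) *
       (∏ y ∈ S \ I, (if y ∈ A then ρL else 1 - ρL))) * ∏ y ∈ T, occ A y
    = ∏ y ∈ T, (if y ∈ I then ρR else ρL) := by
  classical
  set P : ℕ → ℝ := fun y => if y ∈ I then ρR else ρL with hP
  set Q : ℕ → ℝ := fun y => if y ∈ T then 0 else (if y ∈ I then 1 - ρR else 1 - ρL) with hQ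
  have key : ∀ A ∈ S.powerset,
      ((∏ y ∈ I, (if y ∈ A then ρR else 1 - ρR)) *
       (∏ y ∈ S \ I, (if y ∈ A then ρL else 1 - ρL))) * ∏ y ∈ T, occ A y
      = ∏ y ∈ S, (if y ∈ A then P y else Q y) := by
    intro A hA
    rw [Finset.mem_powerset] at hA
    have h1 : (∏ y ∈ I, (if y ∈ A then ρR else 1 - ρR)) *
        (∏ y ∈ S \ I, (if y ∈ A then ρL else 1 - ρL))
        = ∏ y ∈ S, (if y ∈ I then (if y ∈ A then ρR else 1 - ρR)
            else (if y ∈ A then ρL else 1 - ρL)) :=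
      (prod_ite_subset hI _ _).symm
    have h2 : ∏ y ∈ T, occ A y = ∏ y ∈ S, (if y ∈ T then occ A y else 1) := by
      rw [Finset.prod_congr rfl (fun y hy => by simp [hy] :
          ∀ y ∈ T, occ A y = (if y ∈ T then occ A y else 1))]
      exact Finset.prod_subset hT fun y _ hy => by simp [hy]
    rw [h1, h2, ← Finset.prod_mul_distrib]
    refine Finset.prod_congr rfl fun y _ => ?_
    by_cases hi : y ∈ I <;> by_cases ht : y ∈ T <;> by_cases haa : y ∈ A <;>
      simp [occ, hP, hQ, hi, ht, haa]
  rw [Finset.sum_congr rfl key, sum_powerset_prod]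
  have h3 : ∀ y, P y + Q y = if y ∈ T then P y else 1 := by
    intro y
    by_cases hi : y ∈ I <;> by_cases ht : y ∈ T <;> simp [hP, hQ, hi, ht]
  rw [Finset.prod_congr rfl fun y _ => h3 y]
  refine (Finset.prod_subset hT fun y _ hy => by simp [hy]).symm.trans ?_
  exact Finset.prod_congr rfl fun y hy => by simp [hy, hP]

lemma filter_powerset_eq (S J : Finset ℕ) (hJ : J ⊆ S) :
    S.powerset.filter (fun I => I ⊆ J) = J.powerset := by
  ext I
  simp only [Finset.mem_filter, Finset.mem_powerset]
  exact ⟨fun h => h.2, fun h => ⟨h.trans hJ, h⟩⟩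

/-- with ω_L = ω_R = 1, the n-point non-centered correlations of μ. -/
theorem sep_n_point_noncentered_unit
    (N n : ℕ) (hN : 2 ≤ N) (hn : 1 ≤ n) (ρL ρR : ℝ)
    (hρL : 0 < ρL ∧ ρL < 1) (hρR : 0 < ρR ∧ ρR < 1)
    (x : Fin n → ℕ) (hmono : StrictMono x)
    (hx1 : ∀ i, 1 ≤ x i) (hx2 : ∀ i, x i ≤ N - 1) :
    ∑ A ∈ (Finset.Icc 1 (N - 1)).powerset,
        sepMu N 1 1 ρL ρR A * ∏ i, occ A (x i)
      = ∑ j ∈ Finset.range (n + 1), ρL ^ (n - j) * (ρR - ρL) ^ j *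
          ∑ s ∈ Finset.powersetCard j (Finset.univ : Finset (Fin n)), idxProd N n x s := by
  classical
  set S := Finset.Icc 1 (N - 1) with hS
  set e : Fin n ↪ ℕ := ⟨x, hmono.injective⟩ with he
  set T := Finset.univ.map e with hT
  have hTS : T ⊆ S := by
    intro y hy
    simp only [hT, Finset.mem_map, Finset.mem_univ, true_and] at hy
    obtain ⟨i, rfl⟩ := hy
    exact Finset.mem_Icc.2 ⟨hx1 i, hx2 i⟩
  have hcardT : T.card = n := by simp [hT]
  have hocc : ∀ A : Finset ℕ, ∏ i, occ A (x i) = ∏ y ∈ T, occ A y := fun A => by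
    rw [hT, Finset.prod_map]
    rfl
  have step1 : ∑ A ∈ S.powerset, sepMu N 1 1 ρL ρR A * ∏ i, occ A (x i)
      = ∑ I ∈ S.powerset, sepF N 1 1 I * ∏ y ∈ T, (if y ∈ I then ρR else ρL) := by
    have h1 : ∀ A ∈ S.powerset, sepMu N 1 1 ρL ρR A * ∏ i, occ A (x i)
        = ∑ I ∈ S.powerset, sepF N 1 1 I * (sepB N ρL ρR I A * ∏ y ∈ T, occ A y) := by
      intro A _
      rw [hocc A, sepMu, Finset.sum_mul]
      exact Finset.sum_congr rfl fun I _ => by ring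
    rw [Finset.sum_congr rfl h1, Finset.sum_comm]
    refine Finset.sum_congr rfl fun I hI => ?_
    rw [← Finset.mul_sum]
    congr 1
    have := bernoulli_moment S I T (Finset.mem_powerset.1 hI) hTS ρL ρR
    rw [← this]
    exact Finset.sum_congr rfl fun A _ => by rw [sepB]
  have step2 : ∑ I ∈ S.powerset, sepF N 1 1 I * ∏ y ∈ T, (if y ∈ I then ρR else ρL)
      = ∑ J ∈ S.powerset, sepQ N 1 1 J *
          ((∏ _y ∈ T \ J, ρL) * ∏ y ∈ J, (if y ∈ T then ρR - ρL else 0)) := by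
    have l1 : ∀ I ∈ S.powerset, sepF N 1 1 I * ∏ y ∈ T, (if y ∈ I then ρR else ρL)
        = ∑ J ∈ S.powerset, (if I ⊆ J then
            ((-1:ℝ)^((J\I).card) * sepQ N 1 1 J) * ∏ y ∈ T, (if y ∈ I then ρR else ρL)
          else 0) := by
      intro I _
      rw [sepF, Finset.sum_mul, Finset.sum_filter]
    rw [Finset.sum_congr rfl l1, Finset.sum_comm]
    refine Finset.sum_congr rfl fun J hJ => ?_
    rw [← Finset.sum_filter, filter_powerset_eq S J (Finset.mem_powerset.1 hJ)]
    rw [Finset.sum_congr rfl (fun I _ => by ring :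
      ∀ I ∈ J.powerset, ((-1:ℝ)^((J\I).card) * sepQ N 1 1 J) * ∏ y ∈ T, (if y ∈ I then ρR else ρL)
        = sepQ N 1 1 J * ((-1:ℝ)^((J\I).card) * ∏ y ∈ T, (if y ∈ I then ρR else ρL)))]
    rw [← Finset.mul_sum, alt_sum J T ρL ρR]
  have step3 : ∑ J ∈ S.powerset, sepQ N 1 1 J *
          ((∏ _y ∈ T \ J, ρL) * ∏ y ∈ J, (if y ∈ T then ρR - ρL else 0))
      = ∑ J ∈ T.powerset, sepQ N 1 1 J * (ρL ^ (n - J.card) * (ρR - ρL) ^ J.card) := by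
    have vanish : ∀ J ∈ S.powerset, J ∉ T.powerset → sepQ N 1 1 J *
        ((∏ _y ∈ T \ J, ρL) * ∏ y ∈ J, (if y ∈ T then ρR - ρL else 0)) = 0 := by
      intro J _ hJ
      rw [Finset.mem_powerset] at hJ
      obtain ⟨y, hyJ, hyT⟩ := Finset.not_subset.1 hJ
      rw [Finset.prod_eq_zero hyJ (by simp [hyT])]
      ring
    rw [← Finset.sum_subset (Finset.powerset_mono.2 hTS) vanish]
    refine Finset.sum_congr rfl fun J hJ => ?_
    rw [Finset.mem_powerset] at hJ
    congr 1
    rw [Finset.prod_const,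
      Finset.prod_congr rfl (show ∀ y ∈ J, (if y ∈ T then ρR - ρL else 0) = ρR - ρL from
        fun y hy => by simp [hJ hy]),
      Finset.prod_const, Finset.card_sdiff_of_subset hJ, hcardT]
  rw [step1, step2, step3]
  rw [Finset.powerset_card_biUnion T,
    Finset.sum_biUnion (fun i _ j _ hij => Finset.pairwise_disjoint_powersetCard T hij), hcardT]
  refine Finset.sum_congr rfl fun j hj => ?_
  rw [hT, Finset.powersetCard_map, Finset.sum_map, Finset.mul_sum]
  refine Finset.sum_congr rfl fun s hs => ?_
  have hcs : s.card = j := (Finset.mem_powersetCard.1 hs).2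
  have hemb : (Finset.mapEmbedding e).toEmbedding s = s.map e := Finset.mapEmbedding_apply
  rw [hemb, he, sepQ_map_eq N x hmono s, Finset.card_map, hcs]
  ring
end

section
/- Let N ≥ 3, ρ_L, ρ_R ∈ (0,1) and ω_L, ω_R > 0. Then for every 1 ≤ x < y ≤ N−1 the two-point truncated correlation of the explicit measure μ is given by E_μ[η(x)η(y)] − E_μ[η(x)]·E_μ[η(y)] = −(ρ_R − ρ_L)^2 · (1/ω_L + x − 1)(1/ω_R + N − 1 − y) / [ (1/ω_L + 1/ω_R + N − 2)^2 · (1/ω_L + 1/ω_R + N − 3) ], where E_μ[g] := Σ_{η ∈ {0,1}^{{1,…,N−1}}} μ(η) g(η). -/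
section SepAux

open Finset

noncomputable def rfun (ρL ρR : ℝ) (I : Finset ℕ) (z : ℕ) : ℝ := if z ∈ I then ρR else ρL

lemma sepQ_empty (N : ℕ) (ωL ωR : ℝ) : sepQ N ωL ωR ∅ = 1 := by
  simp [sepQ]

lemma sepQ_singleton (N : ℕ) (ωL ωR : ℝ) (x : ℕ) :
    sepQ N ωL ωR {x} =
      (1 / ωL + (x : ℝ) - 1) / (1 / ωL + 1 / ωR + (N : ℝ) - 2) := by
  simp [sepQ, Finset.sort_singleton, List.zipIdx]
  ring_nf

lemma sepQ_pair (N : ℕ) (ωL ωR : ℝ) {x y : ℕ} (hxy : x < y) :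
    sepQ N ωL ωR {x, y} =
      ((1 / ωL + (x : ℝ) - 1) / (1 / ωL + 1 / ωR + (N : ℝ) - 2)) *
      ((1 / ωL + (y : ℝ) - 2) / (1 / ωL + 1 / ωR + (N : ℝ) - 3)) := by
  have hsort : ({x, y} : Finset ℕ).sort (· ≤ ·) = [x, y] := by
    rw [show ({x, y} : Finset ℕ) = insert x {y} from rfl,
      Finset.sort_insert]
    · simp [Finset.sort_singleton]
    · intro b hb; simp at hb; omega
    · simp; omega
  simp [sepQ, hsort, List.zipIdx]
  ring_nf

lemma neg_one_pow_sum (s : Finset ℕ) :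
    ∑ m ∈ s.powerset, (-1 : ℝ) ^ m.card = if s = ∅ then 1 else 0 := by
  have := Finset.sum_powerset_neg_one_pow_card (x := s)
  have h2 : ((∑ m ∈ s.powerset, (-1 : ℤ) ^ m.card : ℤ) : ℝ)
      = ∑ m ∈ s.powerset, (-1 : ℝ) ^ m.card := by push_cast; rfl
  rw [← h2, this]
  split <;> norm_num

lemma inner_alt (K J : Finset ℕ) :
    ∑ I ∈ J.powerset.filter (fun I => K ⊆ I), (-1 : ℝ) ^ (J \ I).card
      = if J = K then 1 else 0 := by
  by_cases hKJ : K ⊆ J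
  · rw [Finset.sum_nbij' (i := fun I => J \ I) (j := fun T => J \ T)
      (t := (J \ K).powerset) (g := fun T => (-1 : ℝ) ^ T.card)]
    · rw [neg_one_pow_sum]
      have : J \ K = ∅ ↔ J = K := by
        rw [Finset.sdiff_eq_empty_iff_subset]
        exact ⟨fun h => Finset.Subset.antisymm h hKJ, fun h => h ▸ Finset.Subset.refl _⟩
      simp only [this]
    · intro I hI
      simp only [Finset.mem_filter, Finset.mem_powerset] at hI ⊢
      exact Finset.sdiff_subset_sdiff (Finset.Subset.refl _) hI.2
    · intro T hT
      simp only [Finset.mem_powerset] at hT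
      simp only [Finset.mem_filter, Finset.mem_powerset]
      refine ⟨Finset.sdiff_subset, Finset.subset_sdiff.2 ⟨hKJ, ?_⟩⟩
      exact Finset.disjoint_right.2 fun a ha => (Finset.mem_sdiff.1 (hT ha)).2
    · intro I hI
      simp only [Finset.mem_filter, Finset.mem_powerset] at hI
      exact Finset.sdiff_sdiff_eq_self hI.1
    · intro T hT
      simp only [Finset.mem_powerset] at hT
      exact Finset.sdiff_sdiff_eq_self (hT.trans Finset.sdiff_subset)
    · intro I hI; rfl
  · rw [Finset.filter_false_of_mem, Finset.sum_empty]
    · rw [if_neg]; rintro rfl; exact hKJ (Finset.Subset.refl _)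
    · intro I hI hKI
      simp only [Finset.mem_powerset] at hI
      exact hKJ (hKI.trans hI)

lemma sumF_eq (N : ℕ) (ωL ωR : ℝ) (K : Finset ℕ) (hK : K ∈ (Finset.Icc 1 (N-1)).powerset) :
    ∑ I ∈ (Finset.Icc 1 (N - 1)).powerset,
      (if K ⊆ I then sepF N ωL ωR I else 0) = sepQ N ωL ωR K := by
  set S := Finset.Icc 1 (N - 1) with hS
  have step1 : ∀ I ∈ S.powerset, (if K ⊆ I then sepF N ωL ωR I else 0)
      = ∑ J ∈ S.powerset,
          (if K ⊆ I ∧ I ⊆ J then (-1 : ℝ) ^ (J \ I).card * sepQ N ωL ωR J else 0) := by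
    intro I _
    by_cases hKI : K ⊆ I
    · rw [if_pos hKI]
      rw [sepF, Finset.sum_filter]
      exact Finset.sum_congr rfl fun J _ => by
        by_cases h : I ⊆ J <;> simp [h, hKI]
    · rw [if_neg hKI]
      symm
      exact Finset.sum_eq_zero fun J _ => by
        rw [if_neg]; rintro ⟨h, _⟩; exact hKI h
  rw [Finset.sum_congr rfl step1, Finset.sum_comm]
  have step2 : ∀ J ∈ S.powerset,
      (∑ I ∈ S.powerset,
        (if K ⊆ I ∧ I ⊆ J then (-1 : ℝ) ^ (J \ I).card * sepQ N ωL ωR J else 0))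
      = (if J = K then 1 else 0) * sepQ N ωL ωR J := by
    intro J hJ
    rw [Finset.mem_powerset] at hJ
    rw [← inner_alt K J, Finset.sum_filter, Finset.sum_mul]
    rw [← Finset.sum_subset (Finset.powerset_mono.2 hJ)]
    · refine Finset.sum_congr rfl fun I hI => ?_
      rw [Finset.mem_powerset] at hI
      by_cases h : K ⊆ I <;> simp [h, hI]
    · intro I hI hI2
      rw [Finset.mem_powerset] at hI
      rw [if_neg]; rintro ⟨_, h⟩
      exact hI2 (Finset.mem_powerset.2 h)
  rw [Finset.sum_congr rfl step2]
  rw [Finset.sum_eq_single_of_mem K hK]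
  · simp
  · intro J _ hJK; simp [hJK]

lemma prod_ite_sum_powerset (S : Finset ℕ) (p q : ℕ → ℝ) :
    ∑ A ∈ S.powerset, ∏ z ∈ S, (if z ∈ A then p z else q z) = ∏ z ∈ S, (p z + q z) := by
  rw [Finset.prod_add]
  refine Finset.sum_congr rfl fun A hA => ?_
  rw [Finset.mem_powerset] at hA
  rw [← Finset.prod_sdiff hA, mul_comm]
  congr 1
  · exact Finset.prod_congr rfl fun z hz => if_pos hz
  · exact Finset.prod_congr rfl fun z hz => if_neg (Finset.mem_sdiff.1 hz).2

lemma sepB_eq_prod (N : ℕ) (ρL ρR : ℝ) {I : Finset ℕ} (A : Finset ℕ)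
    (hI : I ⊆ Finset.Icc 1 (N - 1)) :
    sepB N ρL ρR I A = ∏ z ∈ Finset.Icc 1 (N - 1),
      (if z ∈ A then rfun ρL ρR I z else 1 - rfun ρL ρR I z) := by
  rw [← Finset.prod_sdiff hI, sepB, mul_comm]
  congr 1
  · exact Finset.prod_congr rfl fun z hz => by
      simp [rfun, (Finset.mem_sdiff.1 hz).2]
  · exact Finset.prod_congr rfl fun z hz => by simp [rfun, hz]

lemma sum_B_mul (N : ℕ) (ρL ρR : ℝ) {K I : Finset ℕ}
    (hK : K ⊆ Finset.Icc 1 (N - 1)) (hI : I ⊆ Finset.Icc 1 (N - 1)) :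
    ∑ A ∈ (Finset.Icc 1 (N - 1)).powerset,
        sepB N ρL ρR I A * ∏ w ∈ K, occ A w
      = ∏ w ∈ K, rfun ρL ρR I w := by
  set S := Finset.Icc 1 (N - 1) with hS
  have key : ∀ A ∈ S.powerset, sepB N ρL ρR I A * ∏ w ∈ K, occ A w
      = ∏ z ∈ S, (if z ∈ A then rfun ρL ρR I z
          else (if z ∈ K then 0 else 1 - rfun ρL ρR I z)) := by
    intro A hA
    rw [Finset.mem_powerset] at hA
    by_cases hKA : K ⊆ A
    · have h1 : ∏ w ∈ K, occ A w = 1 :=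
        Finset.prod_eq_one fun w hw => by simp [occ, hKA hw]
      rw [h1, mul_one, sepB_eq_prod N ρL ρR A hI]
      refine Finset.prod_congr rfl fun z _ => ?_
      by_cases hz : z ∈ A
      · simp [hz]
      · have : z ∉ K := fun h => hz (hKA h)
        simp [hz, this]
    · obtain ⟨w, hwK, hwA⟩ := Finset.not_subset.1 hKA
      have h1 : ∏ w ∈ K, occ A w = 0 :=
        Finset.prod_eq_zero hwK (by simp [occ, hwA])
      rw [h1, mul_zero]
      symm
      exact Finset.prod_eq_zero (hK hwK) (by simp [hwA, hwK])
  rw [Finset.sum_congr rfl key, prod_ite_sum_powerset]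
  have : ∀ z ∈ S, (rfun ρL ρR I z + (if z ∈ K then 0 else 1 - rfun ρL ρR I z))
      = (if z ∈ K then rfun ρL ρR I z else 1) := by
    intro z _; by_cases h : z ∈ K <;> simp [h]
  rw [Finset.prod_congr rfl this, Finset.prod_ite_mem,
    Finset.inter_eq_right.2 hK]

lemma sum_mu_occ (N : ℕ) (ωL ωR ρL ρR : ℝ) {K : Finset ℕ}
    (hK : K ⊆ Finset.Icc 1 (N - 1)) :
    ∑ A ∈ (Finset.Icc 1 (N - 1)).powerset,
        sepMu N ωL ωR ρL ρR A * ∏ w ∈ K, occ A w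
      = ∑ I ∈ (Finset.Icc 1 (N - 1)).powerset,
          sepF N ωL ωR I * ∏ w ∈ K, rfun ρL ρR I w := by
  simp only [sepMu, Finset.sum_mul]
  rw [Finset.sum_comm]
  refine Finset.sum_congr rfl fun I hI => ?_
  rw [Finset.mem_powerset] at hI
  rw [← sum_B_mul N ρL ρR hK hI, Finset.mul_sum]
  exact Finset.sum_congr rfl fun A _ => by ring

end SepAux

set_option maxHeartbeats 2000000 in
/-- the two-point truncated correlation of μ. -/
theorem sep_two_point_correlation
    (N : ℕ) (hN : 3 ≤ N) (ρL ρR ωL ωR : ℝ)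
    (hρL : 0 < ρL ∧ ρL < 1) (hρR : 0 < ρR ∧ ρR < 1)
    (hωL : 0 < ωL) (hωR : 0 < ωR)
    (x y : ℕ) (hx : 1 ≤ x) (hxy : x < y) (hy : y ≤ N - 1) :
    (∑ A ∈ (Finset.Icc 1 (N - 1)).powerset,
          sepMu N ωL ωR ρL ρR A * (occ A x * occ A y)) -
        (∑ A ∈ (Finset.Icc 1 (N - 1)).powerset, sepMu N ωL ωR ρL ρR A * occ A x) *
          (∑ A ∈ (Finset.Icc 1 (N - 1)).powerset, sepMu N ωL ωR ρL ρR A * occ A y)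
      = -(ρR - ρL) ^ 2 *
          ((1 / ωL + (x : ℝ) - 1) * (1 / ωR + (N : ℝ) - 1 - (y : ℝ))) /
            ((1 / ωL + 1 / ωR + (N : ℝ) - 2) ^ 2 * (1 / ωL + 1 / ωR + (N : ℝ) - 3)) := by
  have hne : x ≠ y := Nat.ne_of_lt hxy
  have hxmem : x ∈ Finset.Icc 1 (N - 1) := by
    rw [Finset.mem_Icc]; omega
  have hymem : y ∈ Finset.Icc 1 (N - 1) := by
    rw [Finset.mem_Icc]; omega
  have hxS : ({x} : Finset ℕ) ⊆ Finset.Icc 1 (N - 1) :=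
    Finset.singleton_subset_iff.2 hxmem
  have hyS : ({y} : Finset ℕ) ⊆ Finset.Icc 1 (N - 1) :=
    Finset.singleton_subset_iff.2 hymem
  have hxyS : ({x, y} : Finset ℕ) ⊆ Finset.Icc 1 (N - 1) := by
    rw [Finset.insert_subset_iff, Finset.singleton_subset_iff]
    exact ⟨hxmem, hymem⟩
  have hQ0 : ∑ I ∈ (Finset.Icc 1 (N - 1)).powerset, sepF N ωL ωR I = 1 := by
    have h := sumF_eq N ωL ωR ∅ (by simp)
    simpa [sepQ_empty] using h
  -- one-point function
  have hone : ∀ z : ℕ, z ∈ Finset.Icc 1 (N - 1) →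
      (∑ A ∈ (Finset.Icc 1 (N - 1)).powerset, sepMu N ωL ωR ρL ρR A * occ A z)
        = ρL + (ρR - ρL) * sepQ N ωL ωR {z} := by
    intro z hz
    have h1 := sum_mu_occ N ωL ωR ρL ρR (K := {z}) (Finset.singleton_subset_iff.2 hz)
    simp only [Finset.prod_singleton] at h1
    rw [h1]
    have h2 : ∀ I ∈ (Finset.Icc 1 (N - 1)).powerset, sepF N ωL ωR I * rfun ρL ρR I z
        = ρL * sepF N ωL ωR I + (ρR - ρL) * (if ({z} : Finset ℕ) ⊆ I then sepF N ωL ωR I else 0) := by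
      intro I _
      by_cases h : z ∈ I <;>
        simp [rfun, h, Finset.singleton_subset_iff] <;> ring
    rw [Finset.sum_congr rfl h2, Finset.sum_add_distrib, ← Finset.mul_sum, ← Finset.mul_sum,
      hQ0, sumF_eq N ωL ωR {z} (Finset.mem_powerset.2 (Finset.singleton_subset_iff.2 hz)), mul_one]
  -- two-point function
  have htwo : (∑ A ∈ (Finset.Icc 1 (N - 1)).powerset,
        sepMu N ωL ωR ρL ρR A * (occ A x * occ A y))
      = ρL ^ 2 + ρL * (ρR - ρL) * (sepQ N ωL ωR {x} + sepQ N ωL ωR {y})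
        + (ρR - ρL) ^ 2 * sepQ N ωL ωR {x, y} := by
    have h1 := sum_mu_occ N ωL ωR ρL ρR (K := {x, y}) hxyS
    simp only [Finset.prod_pair hne] at h1
    rw [h1]
    have h2 : ∀ I ∈ (Finset.Icc 1 (N - 1)).powerset,
        sepF N ωL ωR I * (rfun ρL ρR I x * rfun ρL ρR I y)
        = ρL ^ 2 * sepF N ωL ωR I
          + ρL * (ρR - ρL) * ((if ({x} : Finset ℕ) ⊆ I then sepF N ωL ωR I else 0)
              + (if ({y} : Finset ℕ) ⊆ I then sepF N ωL ωR I else 0))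
          + (ρR - ρL) ^ 2 * (if ({x, y} : Finset ℕ) ⊆ I then sepF N ωL ωR I else 0) := by
      intro I _
      by_cases h : x ∈ I <;> by_cases h' : y ∈ I <;>
        simp [rfun, h, h', Finset.singleton_subset_iff, Finset.insert_subset_iff] <;> ring
    rw [Finset.sum_congr rfl h2]
    rw [Finset.sum_add_distrib, Finset.sum_add_distrib, ← Finset.mul_sum, ← Finset.mul_sum,
      ← Finset.mul_sum]
    rw [Finset.sum_add_distrib, hQ0, mul_one,
      sumF_eq N ωL ωR {x} (Finset.mem_powerset.2 hxS),
      sumF_eq N ωL ωR {y} (Finset.mem_powerset.2 hyS),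
      sumF_eq N ωL ωR {x, y} (Finset.mem_powerset.2 hxyS)]
  -- final algebra
  rw [htwo, hone x hxmem, hone y hymem, sepQ_singleton, sepQ_singleton, sepQ_pair N ωL ωR hxy]
  have hN3 : (3 : ℝ) ≤ (N : ℝ) := by exact_mod_cast hN
  set a := 1 / ωL with ha
  set b := 1 / ωR with hb
  have h1 : 0 < a := by rw [ha]; positivity
  have h2 : 0 < b := by rw [hb]; positivity
  have hc : a + b + (N : ℝ) - 2 ≠ 0 := by nlinarith
  have hd : a + b + (N : ℝ) - 3 ≠ 0 := by nlinarith
  field_simp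
  ring
end

section
/- Let N ≥ 2 and ω_L, ω_R > 0. Define G on dual configurations by G(ξ) = 0 if ξ(0) ≥ 1, and otherwise, letting x_1 < … < x_m be the sites x ∈ {1,…,N−1} with ξ(x) = 1, G(ξ) = ∏_{i=1}^m (h(x_i) − (i−1))/(h(N) − (i−1)) (an empty product being 1). Then G is harmonic for the dual generator: L̂G(ξ) = 0 for every dual configuration ξ. -/
/-- The harmonic function h on {0,…,N}: h(0) = 0, h(x) = 1/ω_L + x − 1 for 1 ≤ x ≤ N−1,
and h(N) = 1/ω_L + 1/ω_R + N − 2. -/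
noncomputable def hFun (N : ℕ) (ωL ωR : ℝ) (x : ℕ) : ℝ :=
  if x = 0 then 0
  else if x = N then 1 / ωL + 1 / ωR + (N : ℝ) - 2
  else 1 / ωL + (x : ℝ) - 1

/-- ξ^{x,y}: the configuration ξ with one particle moved from x to y. -/
def dualMove (ξ : ℕ → ℕ) (x y : ℕ) : ℕ → ℕ :=
  fun z => if z = y then ξ y + 1 else if z = x then ξ x - 1 else ξ z

/-- The generator L̂ of the dual (absorbing-boundary) process on {0,1,…,N}. -/
noncomputable def dualGen (N : ℕ) (ωL ωR : ℝ) (f : (ℕ → ℕ) → ℝ) (ξ : ℕ → ℕ) : ℝ :=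
  (∑ x ∈ Finset.Icc 1 (N - 2),
      ((ξ x : ℝ) * (1 - (ξ (x + 1) : ℝ)) * (f (dualMove ξ x (x + 1)) - f ξ) +
        (ξ (x + 1) : ℝ) * (1 - (ξ x : ℝ)) * (f (dualMove ξ (x + 1) x) - f ξ))) +
    ωL * (ξ 1 : ℝ) * (f (dualMove ξ 1 0) - f ξ) +
    ωR * (ξ (N - 1) : ℝ) * (f (dualMove ξ (N - 1) N) - f ξ)

/-- G(ξ): zero if some particle is absorbed at 0, otherwise, with x_1 < … < x_m the occupied
bulk sites of ξ, the product ∏_{i=1}^m (h(x_i) − (i−1)) / (h(N) − (i−1)). -/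
noncomputable def dualG (N : ℕ) (ωL ωR : ℝ) (ξ : ℕ → ℕ) : ℝ :=
  if 1 ≤ ξ 0 then 0
  else ((((Finset.Icc 1 (N - 1)).filter (fun x => ξ x = 1)).sort (· ≤ ·)).zipIdx.map
    (fun p => (hFun N ωL ωR p.1 - (p.2 : ℝ)) / (hFun N ωL ωR N - (p.2 : ℝ)))).prod


namespace DualGAux

noncomputable def Fgen (g : ℕ → ℝ) (D : ℝ) : ℝ → List ℕ → ℝ
  | _, [] => 1
  | k, a :: t => (g a - k) / (D - k) * Fgen g D (k + 1) t

@[simp] lemma Fgen_nil (g : ℕ → ℝ) (D k : ℝ) : Fgen g D k [] = 1 := rfl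

lemma Fgen_cons (g : ℕ → ℝ) (D k : ℝ) (a : ℕ) (t : List ℕ) :
    Fgen g D k (a :: t) = (g a - k) / (D - k) * Fgen g D (k + 1) t := rfl

lemma Fgen_append (g : ℕ → ℝ) (D : ℝ) (A B : List ℕ) : ∀ k : ℝ,
    Fgen g D k (A ++ B) = Fgen g D k A * Fgen g D (k + A.length) B := by
  induction A with
  | nil => intro k; simp
  | cons a t ih =>
    intro k
    simp only [List.cons_append, Fgen_cons, ih (k + 1), List.length_cons]
    push_cast
    ring_nf

lemma enumFrom_map_prod (g : ℕ → ℝ) (D : ℝ) (l : List ℕ) : ∀ n : ℕ,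
    ((List.zipIdx l n).map (fun p => (g p.1 - (p.2 : ℝ)) / (D - (p.2 : ℝ)))).prod
      = Fgen g D n l := by
  induction l with
  | nil => intro n; simp
  | cons a t ih =>
    intro n
    rw [List.zipIdx_cons, List.map_cons, List.prod_cons, ih (n + 1), Fgen_cons]
    push_cast
    ring_nf

lemma sort_filter_Icc (n : ℕ) (p : ℕ → Prop) [DecidablePred p] :
    ((Finset.Icc 1 n).filter p).sort (· ≤ ·)
      = (List.range' 1 n).filter (fun x => decide (p x)) := by
  refine (fun hp hs1 hs2 => List.Perm.eq_of_pairwise' hs1 hs2 hp) ?_ (Finset.pairwise_sort _ _) ?_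
  · rw [← Multiset.coe_eq_coe, Finset.sort_eq, Finset.filter_val, Nat.Icc_eq_range']
    simp [Multiset.filter_coe]
  · exact ((List.pairwise_lt_range' (s := 1) (n := n)).filter _).imp le_of_lt

/-- range' split at an interior point y. -/
lemma range'_split_at (n y : ℕ) (h1 : 1 ≤ y) (h2 : y ≤ n) :
    List.range' 1 n = List.range' 1 (y - 1) ++ y :: List.range' (y + 1) (n - y) := by
  have h := List.range'_append (s := 1) (m := y - 1) (n := n - y + 1) (step := 1)
  rw [show 1 + 1 * (y - 1) = y by omega, show y - 1 + (n - y + 1) = n by omega] at h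
  rw [← h, show n - y + 1 = (n - y) + 1 from rfl, List.range'_succ]

lemma range'_split_pair (n x : ℕ) (h1 : 1 ≤ x) (h2 : x + 1 ≤ n) :
    List.range' 1 n
      = List.range' 1 (x - 1) ++ x :: (x + 1) :: List.range' (x + 2) (n - x - 1) := by
  obtain ⟨m, hm⟩ : ∃ m, n - x = m + 1 := ⟨n - x - 1, by omega⟩
  rw [range'_split_at n x h1 (by omega), hm, List.range'_succ,
    show m + 1 - 1 = m from rfl, show x + 1 + 1 = x + 2 from rfl]

/-- The (sorted) occupancy list of ξ on a window. -/
def occR (s n : ℕ) (ξ : ℕ → ℕ) : List ℕ :=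
  (List.range' s n).filter fun z => decide (ξ z = 1)

lemma occR_congr (s n : ℕ) (ξ η : ℕ → ℕ) (h : ∀ z, s ≤ z → z < s + n → η z = ξ z) :
    occR s n η = occR s n ξ := by
  unfold occR
  refine List.filter_congr ?_
  intro z hz
  rw [List.mem_range'_1] at hz
  rw [h z hz.1 hz.2]

lemma occR_move_congr (s n : ℕ) (ξ : ℕ → ℕ) (a b : ℕ)
    (h : ∀ z, s ≤ z → z < s + n → z ≠ a ∧ z ≠ b) :
    occR s n (dualMove ξ a b) = occR s n ξ := by
  refine occR_congr s n ξ _ fun z hz1 hz2 => ?_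
  obtain ⟨ha, hb⟩ := h z hz1 hz2
  unfold dualMove
  rw [if_neg hb, if_neg ha]

lemma occR_nil (s : ℕ) (ξ : ℕ → ℕ) : occR s 0 ξ = [] := rfl

lemma occR_length_le (s n : ℕ) (ξ : ℕ → ℕ) : (occR s n ξ).length ≤ n := by
  unfold occR
  exact le_trans (List.length_filter_le _ _) (by rw [List.length_range'])

lemma occR_head_out (s n : ℕ) (ξ : ℕ → ℕ) (hn : 1 ≤ n) (hs : ¬ ξ s = 1) :
    occR s n ξ = occR (s + 1) (n - 1) ξ := by
  obtain ⟨m, hm⟩ : ∃ m, n = m + 1 := ⟨n - 1, by omega⟩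
  subst hm
  unfold occR
  rw [List.range'_succ, show m + 1 - 1 = m from rfl, List.filter_cons_of_neg (by simpa using hs)]

lemma occR_last_out (s n : ℕ) (ξ : ℕ → ℕ) (hn : 1 ≤ n) (hs : ¬ ξ (s + n - 1) = 1) :
    occR s n ξ = occR s (n - 1) ξ := by
  obtain ⟨m, hm⟩ : ∃ m, n = m + 1 := ⟨n - 1, by omega⟩
  subst hm
  have h := List.range'_append (s := s) (m := m) (n := 1) (step := 1)
  rw [show s + 1 * m = s + m from by omega] at h
  unfold occR
  rw [show m + 1 - 1 = m from rfl, ← h, List.filter_append]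
  have : List.range' (s + m) 1 = [s + m] := rfl
  rw [this, show s + (m + 1) - 1 = s + m from by omega] at *
  rw [List.filter_cons_of_neg (by simpa using hs)]
  simp

/-- Basic facts about hFun. -/
lemma hFun_N (N : ℕ) (ωL ωR : ℝ) (hN : 2 ≤ N) :
    hFun N ωL ωR N = 1 / ωL + 1 / ωR + (N : ℝ) - 2 := by
  unfold hFun
  rw [if_neg (by omega), if_pos rfl]

lemma hFun_mid (N : ℕ) (ωL ωR : ℝ) (x : ℕ) (h1 : 1 ≤ x) (h2 : x ≤ N - 1) (hN : 2 ≤ N) :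
    hFun N ωL ωR x = 1 / ωL + (x : ℝ) - 1 := by
  unfold hFun
  rw [if_neg (by omega), if_neg (by omega)]

lemma hFun_step (N : ℕ) (ωL ωR : ℝ) (x : ℕ) (hN : 2 ≤ N) (h1 : 1 ≤ x)
    (h2 : x + 1 ≤ N - 1) :
    hFun N ωL ωR (x + 1) = hFun N ωL ωR x + 1 := by
  rw [hFun_mid N ωL ωR x h1 (by omega) hN, hFun_mid N ωL ωR (x + 1) (by omega) h2 hN]
  push_cast
  ring

lemma hFun_D_sub_pos (N : ℕ) (ωL ωR : ℝ) (hN : 2 ≤ N) (hωL : 0 < ωL) (hωR : 0 < ωR)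
    (j : ℕ) (hj : j ≤ N - 2) : 0 < hFun N ωL ωR N - (j : ℝ) := by
  rw [hFun_N N ωL ωR hN]
  have h2 : (j : ℝ) ≤ ((N - 2 : ℕ) : ℝ) := Nat.cast_le.mpr hj
  have h3 : ((N - 2 : ℕ) : ℝ) = (N : ℝ) - 2 := by
    have : (2 : ℕ) ≤ N := hN
    push_cast [this]
    ring
  have l1 : 0 < 1 / ωL := by positivity
  have l2 : 0 < 1 / ωR := by positivity
  linarith

/-- Difference of products when one entry moves from u to v with g v = g u + 1. -/
lemma Fgen_diff (g : ℕ → ℝ) (D : ℝ) (A B : List ℕ) (u v : ℕ)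
    (hval : g v = g u + 1) (hD : D - (A.length : ℝ) ≠ 0) :
    Fgen g D 0 (A ++ v :: B) - Fgen g D 0 (A ++ u :: B)
      = Fgen g D 0 A * Fgen g D ((A.length : ℝ) + 1) B / (D - (A.length : ℝ)) := by
  rw [Fgen_append, Fgen_append, Fgen_cons, Fgen_cons, hval]
  simp only [zero_add]
  field_simp
  ring

lemma Fgen_drop_last (g : ℕ → ℝ) (D : ℝ) (A : List ℕ) (u : ℕ)
    (hD : D - (A.length : ℝ) ≠ 0) :
    Fgen g D 0 A - Fgen g D 0 (A ++ [u])
      = Fgen g D 0 A * (D - g u) / (D - (A.length : ℝ)) := by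
  rw [Fgen_append, Fgen_cons, Fgen_nil]
  simp only [zero_add]
  field_simp
  ring


noncomputable def Pfun (g : ℕ → ℝ) (D : ℝ) (l : List ℕ) (i : ℕ) : ℝ :=
  Fgen g D 0 (l.take i) * Fgen g D ((i : ℝ) + 1) (l.drop (i + 1)) / (D - (i : ℝ))

lemma Pfun_succ_eq (g : ℕ → ℝ) (D : ℝ) (l : List ℕ) (j : ℕ) (hj : j + 1 < l.length)
    (hval : g (l.getD (j + 1) 0) = g (l.getD j 0) + 1)
    (hD1 : D - (j : ℝ) ≠ 0) (hD2 : D - ((j : ℝ) + 1) ≠ 0) :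
    Pfun g D l (j + 1) = Pfun g D l j := by
  have hjl : j < l.length := by omega
  rw [List.getD_eq_getElem l 0 hj, List.getD_eq_getElem l 0 hjl] at hval
  have htake : l.take (j + 1) = l.take j ++ [l[j]] := by
    rw [List.take_succ, List.getElem?_eq_getElem hjl]
    rfl
  have hdrop : l.drop (j + 1) = l[j + 1] :: l.drop (j + 1 + 1) := List.drop_eq_getElem_cons hj
  have hlen : ((l.take j).length : ℝ) = (j : ℝ) := by
    norm_cast
    simp [List.length_take]
    omega
  unfold Pfun
  rw [htake, hdrop, Fgen_append]
  simp only [Fgen_cons, Fgen_nil, zero_add]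
  rw [hval, hlen]
  push_cast
  field_simp
  ring


lemma key_cancel (g : ℕ → ℝ) (D : ℝ) (l : List ℕ)
    (hsort : l.Chain' (· < ·))
    (hpos : ∀ y ∈ l, 1 ≤ y)
    (hstep : ∀ j, j + 1 < l.length → l.getD (j + 1) 0 = l.getD j 0 + 1 →
      g (l.getD (j + 1) 0) = g (l.getD j 0) + 1)
    (hD : ∀ i : ℕ, i < l.length → D - (i : ℝ) ≠ 0) :
    ∑ i ∈ Finset.range l.length,
      (((if l.getD i 0 + 1 ∈ l then (0:ℝ) else 1) - (if l.getD i 0 - 1 ∈ l then (0:ℝ) else 1))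
        * Pfun g D l i) = 0 := by
  classical
  have hpw : ∀ i j, i < l.length → j < l.length → i < j → l.getD i 0 < l.getD j 0 := by
    have h1 := List.isChain_iff_pairwise.mp hsort
    rw [List.pairwise_iff_getElem] at h1
    intro i j hi hj hij
    rw [List.getD_eq_getElem l 0 hi, List.getD_eq_getElem l 0 hj]
    exact h1 i j hi hj hij
  set b : ℕ → Prop := fun j => j + 1 < l.length ∧ l.getD (j + 1) 0 = l.getD j 0 + 1 with hbdef
  have hbiff : ∀ i, b i ↔ (i + 1 < l.length ∧ l.getD (i + 1) 0 = l.getD i 0 + 1) :=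
    fun i => Iff.rfl
  clear_value b
  -- membership characterizations
  have hmem : ∀ z, z ∈ l ↔ ∃ j, j < l.length ∧ l.getD j 0 = z := by
    intro z
    rw [List.mem_iff_getElem]
    constructor
    · rintro ⟨j, hj, rfl⟩; exact ⟨j, hj, List.getD_eq_getElem l 0 hj⟩
    · rintro ⟨j, hj, hz⟩; exact ⟨j, hj, by rw [← List.getD_eq_getElem l 0 hj, hz]⟩
  have claim1 : ∀ i, i < l.length →
      (if l.getD i 0 + 1 ∈ l then (0:ℝ) else 1) = 1 - (if b i then 1 else 0) := by
    intro i hi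
    by_cases hbi : b i
    · rw [if_pos hbi, if_pos ((hmem _).mpr ⟨i + 1, ((hbiff i).mp hbi).1, ((hbiff i).mp hbi).2⟩)]; ring
    · have hnm : l.getD i 0 + 1 ∉ l := by
        intro hin
        obtain ⟨j, hj, hjz⟩ := (hmem _).mp hin
        have hij : i < j := by
          by_contra hc
          rcases Nat.lt_or_ge j i with hlt | hge
          · have := hpw j i hj hi hlt; omega
          · have hji : j = i := by omega
            rw [hji] at hjz; omega
        rcases Nat.eq_or_lt_of_le (Nat.succ_le_of_lt hij) with heq | hlt
        · refine hbi ((hbiff i).mpr ⟨?_, ?_⟩)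
          · omega
          · rw [show i + 1 = j from heq]; omega
        · have h1 : i + 1 < l.length := by omega
          have h2 := hpw i (i + 1) hi h1 (by omega)
          have h3 := hpw (i + 1) j h1 hj hlt
          omega
      rw [if_neg hnm, if_neg hbi]; ring
  have claim2 : ∀ i, i < l.length →
      (if l.getD i 0 - 1 ∈ l then (0:ℝ) else 1)
        = 1 - (if 1 ≤ i ∧ b (i - 1) then 1 else 0) := by
    intro i hi
    have hy1 : 1 ≤ l.getD i 0 := by
      apply hpos
      rw [List.getD_eq_getElem l 0 hi]
      exact List.getElem_mem hi
    by_cases hbi : 1 ≤ i ∧ b (i - 1)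
    · have hi1 := hbi.1
      have hblen := ((hbiff (i - 1)).mp hbi.2).1
      have hbval := ((hbiff (i - 1)).mp hbi.2).2
      rw [if_pos hbi, if_pos]
      · ring
      · refine (hmem _).mpr ⟨i - 1, by omega, ?_⟩
        rw [show i - 1 + 1 = i by omega] at hbval
        omega
    · have hnm : l.getD i 0 - 1 ∉ l := by
        intro hin
        obtain ⟨j, hj, hjz⟩ := (hmem _).mp hin
        have hji : j < i := by
          by_contra hc
          rcases Nat.eq_or_lt_of_le (Nat.le_of_not_lt hc) with heq | hlt
          · rw [← heq] at hjz; omega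
          · have := hpw i j hi hj hlt; omega
        have hi1 : 1 ≤ i := by omega
        rcases Nat.eq_or_lt_of_le (Nat.le_sub_one_of_lt hji) with heq | hlt
        · refine hbi ⟨hi1, (hbiff (i - 1)).mpr ⟨by omega, ?_⟩⟩
          rw [show i - 1 + 1 = i by omega, ← heq, hjz]
          omega
        · have h1 : i - 1 < l.length := by omega
          have h2 := hpw j (i - 1) hj h1 hlt
          have h3 := hpw (i - 1) i h1 hi (by omega)
          omega
      rw [if_neg hnm, if_neg hbi]; ring
  have hsum1 : ∑ i ∈ Finset.range l.length,
      (((if l.getD i 0 + 1 ∈ l then (0:ℝ) else 1) - (if l.getD i 0 - 1 ∈ l then (0:ℝ) else 1))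
        * Pfun g D l i)
      = ∑ i ∈ Finset.range l.length,
        ((if 1 ≤ i ∧ b (i - 1) then (1:ℝ) else 0) * Pfun g D l i
          - (if b i then (1:ℝ) else 0) * Pfun g D l i) := by
    refine Finset.sum_congr rfl fun i hi => ?_
    rw [claim1 i (Finset.mem_range.mp hi), claim2 i (Finset.mem_range.mp hi)]
    ring
  rw [hsum1, Finset.sum_sub_distrib]
  obtain hm0 | ⟨m, hm⟩ : l.length = 0 ∨ ∃ m, l.length = m + 1 := by
    rcases l.length with _ | m
    · exact Or.inl rfl
    · exact Or.inr ⟨m, rfl⟩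
  · rw [hm0]; simp
  · rw [hm]
    have e1 : ∑ i ∈ Finset.range (m + 1), (if 1 ≤ i ∧ b (i - 1) then (1:ℝ) else 0) * Pfun g D l i
        = ∑ i ∈ Finset.range m, (if b i then (1:ℝ) else 0) * Pfun g D l (i + 1) := by
      rw [Finset.sum_range_succ']
      have h0 : (if 1 ≤ 0 ∧ b (0 - 1) then (1:ℝ) else 0) * Pfun g D l 0 = 0 := by
        rw [if_neg (by omega)]; ring
      rw [h0, add_zero]
      refine Finset.sum_congr rfl fun i hi => ?_
      congr 1
      rw [show i + 1 - 1 = i from rfl]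
      by_cases hbi : b i
      · rw [if_pos ⟨by omega, hbi⟩, if_pos hbi]
      · rw [if_neg (fun hc => hbi hc.2), if_neg hbi]
    have e2 : ∑ i ∈ Finset.range (m + 1), (if b i then (1:ℝ) else 0) * Pfun g D l i
        = ∑ i ∈ Finset.range m, (if b i then (1:ℝ) else 0) * Pfun g D l i := by
      rw [Finset.sum_range_succ]
      have hbm : ¬ b m := by
        intro hbm
        have := ((hbiff m).mp hbm).1
        omega
      rw [if_neg hbm]
      ring
    rw [e1, e2, ← Finset.sum_sub_distrib]
    refine Finset.sum_eq_zero fun i hi => ?_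
    have him : i < m := Finset.mem_range.mp hi
    by_cases hbi : b i
    · have hj : i + 1 < l.length := by omega
      have hval := hstep i hj ((hbiff i).mp hbi).2
      have hD1 := hD i (by omega)
      have hD2 : D - ((i : ℝ) + 1) ≠ 0 := by
        have h := hD (i + 1) (by omega)
        push_cast at h
        exact h
      rw [Pfun_succ_eq g D l i hj hval hD1 hD2]
      ring
    · rw [if_neg hbi]
      ring


lemma dualG_eq_Fgen (N : ℕ) (ωL ωR : ℝ) (ξ : ℕ → ℕ) :
    dualG N ωL ωR ξ = if 1 ≤ ξ 0 then 0
      else Fgen (hFun N ωL ωR) (hFun N ωL ωR N) 0 (occR 1 (N - 1) ξ) := by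
  unfold dualG
  by_cases h : 1 ≤ ξ 0
  · rw [if_pos h, if_pos h]
  · rw [if_neg h, if_neg h, sort_filter_Icc (N - 1) (fun x => ξ x = 1)]
    have h2 := enumFrom_map_prod (hFun N ωL ωR) (hFun N ωL ωR N) (occR 1 (N - 1) ξ) 0
    simpa [occR] using h2

noncomputable def Qp (N : ℕ) (ωL ωR : ℝ) (ξ : ℕ → ℕ) (y : ℕ) : ℝ :=
  Fgen (hFun N ωL ωR) (hFun N ωL ωR N) 0 (occR 1 (y - 1) ξ)
    * Fgen (hFun N ωL ωR) (hFun N ωL ωR N)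
        (((occR 1 (y - 1) ξ).length : ℝ) + 1) (occR (y + 1) (N - 1 - y) ξ)
    / (hFun N ωL ωR N - ((occR 1 (y - 1) ξ).length : ℝ))

lemma occ_pair (N : ℕ) (ζ : ℕ → ℕ) (x : ℕ) (hx1 : 1 ≤ x) (hx2 : x + 1 ≤ N - 1) :
    occR 1 (N - 1) ζ
      = occR 1 (x - 1) ζ
        ++ List.filter (fun z => decide (ζ z = 1)) [x, x + 1]
        ++ occR (x + 2) (N - 1 - x - 1) ζ := by
  unfold occR
  rw [range'_split_pair (N - 1) x hx1 hx2,
    show (x :: (x + 1) :: List.range' (x + 2) (N - 1 - x - 1))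
      = [x, x + 1] ++ List.range' (x + 2) (N - 1 - x - 1) from rfl,
    List.filter_append, List.filter_append, List.append_assoc]

lemma edge_term (N : ℕ) (hN : 2 ≤ N) (ωL ωR : ℝ) (hωL : 0 < ωL) (hωR : 0 < ωR)
    (ξ : ℕ → ℕ) (hbulk : ∀ x, 1 ≤ x → x ≤ N - 1 → ξ x ≤ 1) (h0 : ¬ 1 ≤ ξ 0)
    (x : ℕ) (hx1 : 1 ≤ x) (hx2 : x ≤ N - 2) :
    (ξ x : ℝ) * (1 - (ξ (x + 1) : ℝ)) * (dualG N ωL ωR (dualMove ξ x (x + 1)) - dualG N ωL ωR ξ)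
      + (ξ (x + 1) : ℝ) * (1 - (ξ x : ℝ)) * (dualG N ωL ωR (dualMove ξ (x + 1) x) - dualG N ωL ωR ξ)
    = (if ξ x = 1 ∧ ξ (x + 1) = 0 then Qp N ωL ωR ξ x else 0)
      - (if ξ (x + 1) = 1 ∧ ξ x = 0 then Qp N ωL ωR ξ (x + 1) else 0) := by
  have hx1N : x ≤ N - 1 := by omega
  have hx1N' : x + 1 ≤ N - 1 := by omega
  have hxv : ξ x = 0 ∨ ξ x = 1 := by have := hbulk x hx1 hx1N; omega
  have hx1v : ξ (x + 1) = 0 ∨ ξ (x + 1) = 1 := by have := hbulk (x + 1) (by omega) hx1N'; omega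
  have hAlen : (occR 1 (x - 1) ξ).length ≤ N - 2 :=
    le_trans (occR_length_le _ _ _) (by omega)
  have hDA : hFun N ωL ωR N - ((occR 1 (x - 1) ξ).length : ℝ) ≠ 0 :=
    ne_of_gt (hFun_D_sub_pos N ωL ωR hN hωL hωR _ hAlen)
  have hξ0 : ξ 0 = 0 := by omega
  rcases hxv with hx0 | hx1' <;> rcases hx1v with hy0 | hy1
  · rw [hx0, hy0]; norm_num
  · -- left jump: particle at x+1 moves to x
    have hmid : List.filter (fun z => decide (ξ z = 1)) [x, x + 1] = [x + 1] := by
      rw [List.filter_cons_of_neg (by simp [hx0]),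
        List.filter_cons_of_pos (by simp [hy1]), List.filter_nil]
    have hoccξ : occR 1 (N - 1) ξ
        = occR 1 (x - 1) ξ ++ ((x + 1) :: occR (x + 2) (N - 1 - x - 1) ξ) := by
      rw [occ_pair N ξ x hx1 hx1N', hmid, List.append_assoc]
      rfl
    have hηx : dualMove ξ (x + 1) x x = 1 := by
      unfold dualMove
      rw [if_pos rfl, hx0]
    have hηy : dualMove ξ (x + 1) x (x + 1) = 0 := by
      unfold dualMove
      rw [if_neg (by omega), if_pos rfl, hy1]
    have hη0 : dualMove ξ (x + 1) x 0 = ξ 0 := by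
      unfold dualMove
      rw [if_neg (by omega), if_neg (by omega)]
    have hmidη : List.filter (fun z => decide (dualMove ξ (x + 1) x z = 1)) [x, x + 1]
        = [x] := by
      rw [List.filter_cons_of_pos (by simp [hηx]),
        List.filter_cons_of_neg (by simp [hηy]), List.filter_nil]
    have hA : occR 1 (x - 1) (dualMove ξ (x + 1) x) = occR 1 (x - 1) ξ :=
      occR_move_congr _ _ _ _ _ (fun z hz1 hz2 => by omega)
    have hB : occR (x + 2) (N - 1 - x - 1) (dualMove ξ (x + 1) x)
        = occR (x + 2) (N - 1 - x - 1) ξ :=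
      occR_move_congr _ _ _ _ _ (fun z hz1 hz2 => by omega)
    have hoccη : occR 1 (N - 1) (dualMove ξ (x + 1) x)
        = occR 1 (x - 1) ξ ++ (x :: occR (x + 2) (N - 1 - x - 1) ξ) := by
      rw [occ_pair N (dualMove ξ (x + 1) x) x hx1 hx1N', hmidη, hA, hB, List.append_assoc]
      rfl
    have hdiff := Fgen_diff (hFun N ωL ωR) (hFun N ωL ωR N) (occR 1 (x - 1) ξ)
      (occR (x + 2) (N - 1 - x - 1) ξ) x (x + 1)
      (hFun_step N ωL ωR x hN hx1 hx1N') hDA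
    have hGξ : dualG N ωL ωR ξ
        = Fgen (hFun N ωL ωR) (hFun N ωL ωR N) 0 (occR 1 (N - 1) ξ) := by
      rw [dualG_eq_Fgen, if_neg h0]
    have hGη : dualG N ωL ωR (dualMove ξ (x + 1) x)
        = Fgen (hFun N ωL ωR) (hFun N ωL ωR N) 0 (occR 1 (N - 1) (dualMove ξ (x + 1) x)) := by
      rw [dualG_eq_Fgen, if_neg (by rw [hη0]; exact h0)]
    have hQ : Qp N ωL ωR ξ (x + 1)
        = Fgen (hFun N ωL ωR) (hFun N ωL ωR N) 0 (occR 1 (x - 1) ξ)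
          * Fgen (hFun N ωL ωR) (hFun N ωL ωR N)
              (((occR 1 (x - 1) ξ).length : ℝ) + 1) (occR (x + 2) (N - 1 - x - 1) ξ)
          / (hFun N ωL ωR N - ((occR 1 (x - 1) ξ).length : ℝ)) := by
      unfold Qp
      rw [show x + 1 - 1 = x from rfl,
        occR_last_out 1 x ξ (by omega) (by rw [show 1 + x - 1 = x by omega]; omega),
        show x + 1 + 1 = x + 2 from rfl, show N - 1 - (x + 1) = N - 1 - x - 1 by omega]
    rw [hGξ, hGη, hoccξ, hoccη, hx0, hy1, hQ]
    rw [if_neg (by norm_num), if_pos (by norm_num)]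
    push_cast
    linarith [hdiff]
  · -- right jump: particle at x moves to x+1
    have hmid : List.filter (fun z => decide (ξ z = 1)) [x, x + 1] = [x] := by
      rw [List.filter_cons_of_pos (by simp [hx1']),
        List.filter_cons_of_neg (by simp [hy0]), List.filter_nil]
    have hoccξ : occR 1 (N - 1) ξ
        = occR 1 (x - 1) ξ ++ (x :: occR (x + 2) (N - 1 - x - 1) ξ) := by
      rw [occ_pair N ξ x hx1 hx1N', hmid, List.append_assoc]
      rfl
    have hηx : dualMove ξ x (x + 1) x = 0 := by
      unfold dualMove
      rw [if_neg (by omega), if_pos rfl, hx1']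
    have hηy : dualMove ξ x (x + 1) (x + 1) = 1 := by
      unfold dualMove
      rw [if_pos rfl, hy0]
    have hη0 : dualMove ξ x (x + 1) 0 = ξ 0 := by
      unfold dualMove
      rw [if_neg (by omega), if_neg (by omega)]
    have hmidη : List.filter (fun z => decide (dualMove ξ x (x + 1) z = 1)) [x, x + 1]
        = [x + 1] := by
      rw [List.filter_cons_of_neg (by simp [hηx]),
        List.filter_cons_of_pos (by simp [hηy]), List.filter_nil]
    have hA : occR 1 (x - 1) (dualMove ξ x (x + 1)) = occR 1 (x - 1) ξ :=
      occR_move_congr _ _ _ _ _ (fun z hz1 hz2 => by omega)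
    have hB : occR (x + 2) (N - 1 - x - 1) (dualMove ξ x (x + 1))
        = occR (x + 2) (N - 1 - x - 1) ξ :=
      occR_move_congr _ _ _ _ _ (fun z hz1 hz2 => by omega)
    have hoccη : occR 1 (N - 1) (dualMove ξ x (x + 1))
        = occR 1 (x - 1) ξ ++ ((x + 1) :: occR (x + 2) (N - 1 - x - 1) ξ) := by
      rw [occ_pair N (dualMove ξ x (x + 1)) x hx1 hx1N', hmidη, hA, hB, List.append_assoc]
      rfl
    have hdiff := Fgen_diff (hFun N ωL ωR) (hFun N ωL ωR N) (occR 1 (x - 1) ξ)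
      (occR (x + 2) (N - 1 - x - 1) ξ) x (x + 1)
      (hFun_step N ωL ωR x hN hx1 hx1N') hDA
    have hGξ : dualG N ωL ωR ξ
        = Fgen (hFun N ωL ωR) (hFun N ωL ωR N) 0 (occR 1 (N - 1) ξ) := by
      rw [dualG_eq_Fgen, if_neg h0]
    have hGη : dualG N ωL ωR (dualMove ξ x (x + 1))
        = Fgen (hFun N ωL ωR) (hFun N ωL ωR N) 0 (occR 1 (N - 1) (dualMove ξ x (x + 1))) := by
      rw [dualG_eq_Fgen, if_neg (by rw [hη0]; exact h0)]
    have hQ : Qp N ωL ωR ξ x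
        = Fgen (hFun N ωL ωR) (hFun N ωL ωR N) 0 (occR 1 (x - 1) ξ)
          * Fgen (hFun N ωL ωR) (hFun N ωL ωR N)
              (((occR 1 (x - 1) ξ).length : ℝ) + 1) (occR (x + 2) (N - 1 - x - 1) ξ)
          / (hFun N ωL ωR N - ((occR 1 (x - 1) ξ).length : ℝ)) := by
      unfold Qp
      rw [occR_head_out (x + 1) (N - 1 - x) ξ (by omega) (by omega),
        show x + 1 + 1 = x + 2 from rfl]
    rw [hGξ, hGη, hoccξ, hoccη, hx1', hy0, hQ]
    rw [if_pos (by norm_num), if_neg (by norm_num)]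
    push_cast
    linarith [hdiff]
  · rw [hx1', hy1]; norm_num

lemma left_term (N : ℕ) (hN : 2 ≤ N) (ωL ωR : ℝ) (hωL : 0 < ωL) (hωR : 0 < ωR)
    (ξ : ℕ → ℕ) (hbulk : ∀ x, 1 ≤ x → x ≤ N - 1 → ξ x ≤ 1) (h0 : ¬ 1 ≤ ξ 0) :
    ωL * (ξ 1 : ℝ) * (dualG N ωL ωR (dualMove ξ 1 0) - dualG N ωL ωR ξ)
      = -(if ξ 1 = 1 then Qp N ωL ωR ξ 1 else 0) := by
  have h1N : 1 ≤ N - 1 := by omega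
  by_cases h : ξ 1 = 1
  · have hGη : dualG N ωL ωR (dualMove ξ 1 0) = 0 := by
      rw [dualG_eq_Fgen, if_pos]
      show 1 ≤ dualMove ξ 1 0 0
      unfold dualMove
      rw [if_pos rfl]
      omega
    have hGξ : dualG N ωL ωR ξ
        = Fgen (hFun N ωL ωR) (hFun N ωL ωR N) 0 (occR 1 (N - 1) ξ) := by
      rw [dualG_eq_Fgen, if_neg h0]
    have hsp : occR 1 (N - 1) ξ = 1 :: occR 2 (N - 1 - 1) ξ := by
      unfold occR
      rw [range'_split_at (N - 1) 1 le_rfl h1N,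
        show (1:ℕ) - 1 = 0 from rfl, List.range'_zero, List.nil_append,
        List.filter_cons_of_pos (by simp [h]), show (1:ℕ) + 1 = 2 from rfl]
    have hQ : Qp N ωL ωR ξ 1
        = Fgen (hFun N ωL ωR) (hFun N ωL ωR N) (0 + 1) (occR 2 (N - 1 - 1) ξ)
          / hFun N ωL ωR N := by
      unfold Qp
      rw [show (1:ℕ) - 1 = 0 from rfl, show (1:ℕ) + 1 = 2 from rfl]
      rw [show occR 1 0 ξ = [] from rfl]
      simp [Fgen_nil]
    have hg1 : hFun N ωL ωR 1 = 1 / ωL := by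
      rw [hFun_mid N ωL ωR 1 le_rfl h1N hN]
      norm_num
    have hD0 : hFun N ωL ωR N - ((0:ℕ):ℝ) ≠ 0 :=
      ne_of_gt (hFun_D_sub_pos N ωL ωR hN hωL hωR 0 (by omega))
    rw [hGη, hGξ, hsp, Fgen_cons, hg1, hQ, if_pos h, h]
    push_cast at hD0 ⊢
    rw [sub_zero] at hD0
    field_simp
    ring
  · have hξ1 : ξ 1 = 0 := by have := hbulk 1 le_rfl h1N; omega
    rw [if_neg h, hξ1]
    norm_num

lemma right_term (N : ℕ) (hN : 2 ≤ N) (ωL ωR : ℝ) (hωL : 0 < ωL) (hωR : 0 < ωR)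
    (ξ : ℕ → ℕ) (hbulk : ∀ x, 1 ≤ x → x ≤ N - 1 → ξ x ≤ 1) (h0 : ¬ 1 ≤ ξ 0) :
    ωR * (ξ (N - 1) : ℝ) * (dualG N ωL ωR (dualMove ξ (N - 1) N) - dualG N ωL ωR ξ)
      = (if ξ (N - 1) = 1 then Qp N ωL ωR ξ (N - 1) else 0) := by
  have h1N : 1 ≤ N - 1 := by omega
  by_cases h : ξ (N - 1) = 1
  · have hη0 : dualMove ξ (N - 1) N 0 = ξ 0 := by
      unfold dualMove
      rw [if_neg (by omega), if_neg (by omega)]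
    have hηl : dualMove ξ (N - 1) N (N - 1) = 0 := by
      unfold dualMove
      rw [if_neg (by omega), if_pos rfl, h]
    have hGη : dualG N ωL ωR (dualMove ξ (N - 1) N)
        = Fgen (hFun N ωL ωR) (hFun N ωL ωR N) 0 (occR 1 (N - 1) (dualMove ξ (N - 1) N)) := by
      rw [dualG_eq_Fgen, if_neg (by rw [hη0]; exact h0)]
    have hGξ : dualG N ωL ωR ξ
        = Fgen (hFun N ωL ωR) (hFun N ωL ωR N) 0 (occR 1 (N - 1) ξ) := by
      rw [dualG_eq_Fgen, if_neg h0]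
    have hsp : occR 1 (N - 1) ξ = occR 1 (N - 1 - 1) ξ ++ [N - 1] := by
      unfold occR
      rw [range'_split_at (N - 1) (N - 1) h1N le_rfl, List.filter_append,
        show N - 1 - (N - 1) = 0 by omega, List.range'_zero,
        List.filter_cons_of_pos (by simp [h]), List.filter_nil]
    have hspη : occR 1 (N - 1) (dualMove ξ (N - 1) N) = occR 1 (N - 1 - 1) ξ := by
      have hA : occR 1 (N - 1 - 1) (dualMove ξ (N - 1) N) = occR 1 (N - 1 - 1) ξ :=
        occR_move_congr _ _ _ _ _ (fun z hz1 hz2 => by omega)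
      unfold occR at hA ⊢
      rw [range'_split_at (N - 1) (N - 1) h1N le_rfl, List.filter_append,
        show N - 1 - (N - 1) = 0 by omega, List.range'_zero,
        List.filter_cons_of_neg (by simp [hηl]), List.filter_nil, hA, List.append_nil]
    have hAlen : (occR 1 (N - 1 - 1) ξ).length ≤ N - 2 :=
      le_trans (occR_length_le _ _ _) (by omega)
    have hDA : hFun N ωL ωR N - ((occR 1 (N - 1 - 1) ξ).length : ℝ) ≠ 0 :=
      ne_of_gt (hFun_D_sub_pos N ωL ωR hN hωL hωR _ hAlen)
    have hdrop := Fgen_drop_last (hFun N ωL ωR) (hFun N ωL ωR N)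
      (occR 1 (N - 1 - 1) ξ) (N - 1) hDA
    have hgl : hFun N ωL ωR N - hFun N ωL ωR (N - 1) = 1 / ωR := by
      rw [hFun_N N ωL ωR hN, hFun_mid N ωL ωR (N - 1) h1N le_rfl hN]
      have hc : ((N - 1 : ℕ) : ℝ) = (N : ℝ) - 1 := by
        have : (1 : ℕ) ≤ N := by omega
        push_cast [this]
        ring
      rw [hc]
      ring
    have hQ : Qp N ωL ωR ξ (N - 1)
        = Fgen (hFun N ωL ωR) (hFun N ωL ωR N) 0 (occR 1 (N - 1 - 1) ξ)
          / (hFun N ωL ωR N - ((occR 1 (N - 1 - 1) ξ).length : ℝ)) := by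
      unfold Qp
      rw [show N - 1 - (N - 1) = 0 by omega, show occR (N - 1 + 1) 0 ξ = [] from rfl,
        Fgen_nil]
      ring
    rw [hGη, hGξ, hsp, hspη, if_pos h, h, hQ]
    push_cast
    rw [hdrop, hgl]
    field_simp
  · have hξ1 : ξ (N - 1) = 0 := by have := hbulk (N - 1) h1N le_rfl; omega
    rw [if_neg h, hξ1]
    norm_num

lemma map_sum_range (f : ℕ → ℝ) : ∀ l : List ℕ,
    (l.map f).sum = ∑ i ∈ Finset.range l.length, f (l.getD i 0) := by
  intro l
  induction l with
  | nil => simp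
  | cons a t ih =>
    rw [List.map_cons, List.sum_cons, ih, List.length_cons, Finset.sum_range_succ']
    simp only [List.getD_cons_succ, List.getD_cons_zero]
    exact add_comm _ _

lemma filter_sum_eq (N : ℕ) (ξ : ℕ → ℕ) (f : ℕ → ℝ) :
    ∑ y ∈ (Finset.Icc 1 (N - 1)).filter (fun y => ξ y = 1), f y
      = ((occR 1 (N - 1) ξ).map f).sum := by
  classical
  have hs := Finset.sort_eq ((Finset.Icc 1 (N - 1)).filter (fun y => ξ y = 1)) (· ≤ ·)
  have hocc : occR 1 (N - 1) ξ
      = ((Finset.Icc 1 (N - 1)).filter (fun y => ξ y = 1)).sort (· ≤ ·) :=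
    (sort_filter_Icc (N - 1) (fun y => ξ y = 1)).symm
  rw [hocc, Finset.sum, ← hs, Multiset.map_coe, Multiset.sum_coe]

lemma occ_mem_bounds (N : ℕ) (ξ : ℕ → ℕ) (y : ℕ) (hy : y ∈ occR 1 (N - 1) ξ) :
    1 ≤ y ∧ y ≤ N - 1 ∧ ξ y = 1 := by
  unfold occR at hy
  rw [List.mem_filter, List.mem_range'_1] at hy
  obtain ⟨⟨h1, h2⟩, h3⟩ := hy
  simp only [decide_eq_true_eq] at h3
  exact ⟨h1, by omega, h3⟩

lemma occ_split_mid (N : ℕ) (ξ : ℕ → ℕ) (y : ℕ) (h1 : 1 ≤ y) (h2 : y ≤ N - 1) (hy : ξ y = 1) :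
    occR 1 (N - 1) ξ = occR 1 (y - 1) ξ ++ y :: occR (y + 1) (N - 1 - y) ξ := by
  unfold occR
  rw [range'_split_at (N - 1) y h1 h2, List.filter_append,
    List.filter_cons_of_pos (by simp [hy])]

lemma occ_nodup (N : ℕ) (ξ : ℕ → ℕ) : (occR 1 (N - 1) ξ).Nodup :=
  ((List.pairwise_lt_range' (s := 1) (n := N - 1)).filter _).imp ne_of_lt

lemma Qp_eq_Pfun (N : ℕ) (hN : 2 ≤ N) (ωL ωR : ℝ) (ξ : ℕ → ℕ) (i : ℕ)
    (hi : i < (occR 1 (N - 1) ξ).length) :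
    Qp N ωL ωR ξ ((occR 1 (N - 1) ξ).getD i 0)
      = Pfun (hFun N ωL ωR) (hFun N ωL ωR N) (occR 1 (N - 1) ξ) i := by
  set y := (occR 1 (N - 1) ξ).getD i 0 with hydef
  have hyL : y ∈ occR 1 (N - 1) ξ := by
    rw [hydef, List.getD_eq_getElem _ 0 hi]
    exact List.getElem_mem hi
  have hyprop := hyL
  unfold occR at hyprop
  rw [List.mem_filter, List.mem_range'_1] at hyprop
  obtain ⟨⟨hge, hlt⟩, hocc⟩ := hyprop
  have hocc' : ξ y = 1 := by simpa using hocc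
  have hsp := occ_split_mid N ξ y hge (by omega) hocc'
  have hiA : (occR 1 (y - 1) ξ).length < (occR 1 (N - 1) ξ).length := by
    rw [hsp, List.length_append, List.length_cons]
    omega
  have hgetA : (occR 1 (N - 1) ξ)[(occR 1 (y - 1) ξ).length]'hiA = y := by
    rw [List.getElem_of_eq hsp, List.getElem_append_right (le_refl _)]
    simp
  have hgeti : (occR 1 (N - 1) ξ)[i]'hi = y := by
    rw [hydef, List.getD_eq_getElem _ 0 hi]
  have hieq : i = (occR 1 (y - 1) ξ).length :=
    ((occ_nodup N ξ).getElem_inj_iff).mp (hgeti.trans hgetA.symm)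
  unfold Qp Pfun
  rw [hieq, hsp]
  rw [show (occR 1 (y - 1) ξ ++ y :: occR (y + 1) (N - 1 - y) ξ).take (occR 1 (y - 1) ξ).length
      = occR 1 (y - 1) ξ from List.take_left' rfl]
  rw [show (occR 1 (y - 1) ξ ++ y :: occR (y + 1) (N - 1 - y) ξ).drop ((occR 1 (y - 1) ξ).length + 1)
      = occR (y + 1) (N - 1 - y) ξ by
    rw [show occR 1 (y - 1) ξ ++ y :: occR (y + 1) (N - 1 - y) ξ
        = (occR 1 (y - 1) ξ ++ [y]) ++ occR (y + 1) (N - 1 - y) ξ by simp]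
    exact List.drop_left' (by simp)]

end DualGAux

open DualGAux in
/-- G is harmonic for the dual generator on dual configurations. -/
theorem dualG_harmonic
    (N : ℕ) (hN : 2 ≤ N) (ωL ωR : ℝ) (hωL : 0 < ωL) (hωR : 0 < ωR) :
    ∀ ξ : ℕ → ℕ, (∀ x ∈ Finset.Icc 1 (N - 1), ξ x ≤ 1) →
      dualGen N ωL ωR (dualG N ωL ωR) ξ = 0 := by
  intro ξ hbulkF
  have hbulk : ∀ x, 1 ≤ x → x ≤ N - 1 → ξ x ≤ 1 :=
    fun x h1 h2 => hbulkF x (Finset.mem_Icc.mpr ⟨h1, h2⟩)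
  by_cases h0 : 1 ≤ ξ 0
  · -- absorbed case: G vanishes on ξ and all reachable configurations
    have hz : ∀ η : ℕ → ℕ, 1 ≤ η 0 → dualG N ωL ωR η = 0 := by
      intro η hη
      rw [dualG_eq_Fgen, if_pos hη]
    unfold dualGen
    rw [hz ξ h0]
    have hsum : ∀ x ∈ Finset.Icc 1 (N - 2),
        (ξ x : ℝ) * (1 - (ξ (x + 1) : ℝ)) * (dualG N ωL ωR (dualMove ξ x (x + 1)) - 0)
          + (ξ (x + 1) : ℝ) * (1 - (ξ x : ℝ)) * (dualG N ωL ωR (dualMove ξ (x + 1) x) - 0)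
        = 0 := by
      intro x hx
      obtain ⟨hx1, hx2⟩ := Finset.mem_Icc.mp hx
      have e1 : dualG N ωL ωR (dualMove ξ x (x + 1)) = 0 := by
        apply hz
        show 1 ≤ dualMove ξ x (x + 1) 0
        unfold dualMove
        rw [if_neg (by omega), if_neg (by omega)]
        exact h0
      have e2 : dualG N ωL ωR (dualMove ξ (x + 1) x) = 0 := by
        apply hz
        show 1 ≤ dualMove ξ (x + 1) x 0
        unfold dualMove
        rw [if_neg (by omega), if_neg (by omega)]
        exact h0
      rw [e1, e2]
      ring
    rw [Finset.sum_congr rfl hsum]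
    have e3 : dualG N ωL ωR (dualMove ξ 1 0) = 0 := by
      apply hz
      show 1 ≤ dualMove ξ 1 0 0
      unfold dualMove
      rw [if_pos rfl]
      omega
    have e4 : dualG N ωL ωR (dualMove ξ (N - 1) N) = 0 := by
      apply hz
      show 1 ≤ dualMove ξ (N - 1) N 0
      unfold dualMove
      rw [if_neg (by omega), if_neg (by omega)]
      exact h0
    rw [e3, e4]
    simp
  · -- main case
    unfold dualGen
    have hedge : (∑ x ∈ Finset.Icc 1 (N - 2),
        ((ξ x : ℝ) * (1 - (ξ (x + 1) : ℝ))
            * (dualG N ωL ωR (dualMove ξ x (x + 1)) - dualG N ωL ωR ξ)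
          + (ξ (x + 1) : ℝ) * (1 - (ξ x : ℝ))
            * (dualG N ωL ωR (dualMove ξ (x + 1) x) - dualG N ωL ωR ξ)))
        = ∑ x ∈ Finset.Icc 1 (N - 2),
          ((if ξ x = 1 ∧ ξ (x + 1) = 0 then Qp N ωL ωR ξ x else 0)
            - (if ξ (x + 1) = 1 ∧ ξ x = 0 then Qp N ωL ωR ξ (x + 1) else 0)) := by
      refine Finset.sum_congr rfl fun x hx => ?_
      obtain ⟨hx1, hx2⟩ := Finset.mem_Icc.mp hx
      exact edge_term N hN ωL ωR hωL hωR ξ hbulk h0 x hx1 hx2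
    rw [hedge, left_term N hN ωL ωR hωL hωR ξ hbulk h0,
      right_term N hN ωL ωR hωL hωR ξ hbulk h0, Finset.sum_sub_distrib]
    have eR : ∑ y ∈ Finset.Icc 1 (N - 1),
        (if ξ y = 1 ∧ (y = N - 1 ∨ ξ (y + 1) = 0) then Qp N ωL ωR ξ y else 0)
        = (∑ x ∈ Finset.Icc 1 (N - 2),
            if ξ x = 1 ∧ ξ (x + 1) = 0 then Qp N ωL ωR ξ x else 0)
          + (if ξ (N - 1) = 1 then Qp N ωL ωR ξ (N - 1) else 0) := by
      have hins : Finset.Icc 1 (N - 1) = insert (N - 1) (Finset.Icc 1 (N - 2)) := by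
        ext z
        simp only [Finset.mem_Icc, Finset.mem_insert]
        omega
      rw [hins, Finset.sum_insert (by simp only [Finset.mem_Icc]; omega)]
      have hhead : (if ξ (N - 1) = 1 ∧ (N - 1 = N - 1 ∨ ξ (N - 1 + 1) = 0)
            then Qp N ωL ωR ξ (N - 1) else 0)
          = (if ξ (N - 1) = 1 then Qp N ωL ωR ξ (N - 1) else 0) := by
        by_cases h : ξ (N - 1) = 1
        · rw [if_pos ⟨h, Or.inl rfl⟩, if_pos h]
        · rw [if_neg (fun c => h c.1), if_neg h]
      have hbody : ∀ y ∈ Finset.Icc 1 (N - 2),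
          (if ξ y = 1 ∧ (y = N - 1 ∨ ξ (y + 1) = 0) then Qp N ωL ωR ξ y else 0)
            = (if ξ y = 1 ∧ ξ (y + 1) = 0 then Qp N ωL ωR ξ y else 0) := by
        intro y hy
        obtain ⟨hy1, hy2⟩ := Finset.mem_Icc.mp hy
        by_cases h : ξ y = 1 ∧ ξ (y + 1) = 0
        · rw [if_pos ⟨h.1, Or.inr h.2⟩, if_pos h]
        · rw [if_neg, if_neg h]
          rintro ⟨ha, hb | hc⟩
          · omega
          · exact h ⟨ha, hc⟩
      rw [hhead, Finset.sum_congr rfl hbody]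
      exact add_comm _ _
    have eL : ∑ y ∈ Finset.Icc 1 (N - 1),
        (if ξ y = 1 ∧ (y = 1 ∨ ξ (y - 1) = 0) then Qp N ωL ωR ξ y else 0)
        = (∑ x ∈ Finset.Icc 1 (N - 2),
            if ξ (x + 1) = 1 ∧ ξ x = 0 then Qp N ωL ωR ξ (x + 1) else 0)
          + (if ξ 1 = 1 then Qp N ωL ωR ξ 1 else 0) := by
      have hins : Finset.Icc 1 (N - 1) = insert 1 (Finset.Icc 2 (N - 1)) := by
        ext z
        simp only [Finset.mem_Icc, Finset.mem_insert]
        omega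
      rw [hins, Finset.sum_insert (by simp only [Finset.mem_Icc]; omega)]
      have hhead : (if ξ 1 = 1 ∧ ((1:ℕ) = 1 ∨ ξ (1 - 1) = 0) then Qp N ωL ωR ξ 1 else 0)
          = (if ξ 1 = 1 then Qp N ωL ωR ξ 1 else 0) := by
        by_cases h : ξ 1 = 1
        · rw [if_pos ⟨h, Or.inl rfl⟩, if_pos h]
        · rw [if_neg (fun c => h c.1), if_neg h]
      have himg : Finset.Icc 2 (N - 1) = Finset.image (fun x => x + 1) (Finset.Icc 1 (N - 2)) := by
        ext z
        simp only [Finset.mem_Icc, Finset.mem_image]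
        constructor
        · intro hz
          exact ⟨z - 1, by omega, by omega⟩
        · rintro ⟨a, ha, rfl⟩
          omega
      rw [hhead, himg, Finset.sum_image (by intro a _ b _ h; simp only at h; omega)]
      have hbody : ∀ y ∈ Finset.Icc 1 (N - 2),
          (if ξ (y + 1) = 1 ∧ (y + 1 = 1 ∨ ξ (y + 1 - 1) = 0) then Qp N ωL ωR ξ (y + 1) else 0)
            = (if ξ (y + 1) = 1 ∧ ξ y = 0 then Qp N ωL ωR ξ (y + 1) else 0) := by
        intro y hy
        obtain ⟨hy1, hy2⟩ := Finset.mem_Icc.mp hy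
        rw [show y + 1 - 1 = y from rfl]
        by_cases h : ξ (y + 1) = 1 ∧ ξ y = 0
        · rw [if_pos ⟨h.1, Or.inr h.2⟩, if_pos h]
        · rw [if_neg, if_neg h]
          rintro ⟨ha, hb | hc⟩
          · omega
          · exact h ⟨ha, hc⟩
      rw [Finset.sum_congr rfl hbody]
      exact add_comm _ _
    have efin : (∑ y ∈ Finset.Icc 1 (N - 1),
          (if ξ y = 1 ∧ (y = N - 1 ∨ ξ (y + 1) = 0) then Qp N ωL ωR ξ y else 0))
        - (∑ y ∈ Finset.Icc 1 (N - 1),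
          (if ξ y = 1 ∧ (y = 1 ∨ ξ (y - 1) = 0) then Qp N ωL ωR ξ y else 0)) = 0 := by
      rw [← Finset.sum_sub_distrib]
      have hmem1 : ∀ y, 1 ≤ y → y ≤ N - 1 → ξ y = 1 →
          ((y = N - 1 ∨ ξ (y + 1) = 0) ↔ ¬ (y + 1) ∈ occR 1 (N - 1) ξ) := by
        intro y h1 h2 hy
        unfold occR
        rw [List.mem_filter, List.mem_range'_1]
        constructor
        · rintro (rfl | hz) hc
          · obtain ⟨⟨hc1, hc2⟩, hc3⟩ := hc
            omega
          · obtain ⟨⟨hc1, hc2⟩, hc3⟩ := hc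
            simp only [decide_eq_true_eq] at hc3
            omega
        · intro hn
          by_cases hyN : y = N - 1
          · exact Or.inl hyN
          · right
            have h3 : y + 1 ≤ N - 1 := by omega
            have h4 := hbulk (y + 1) (by omega) h3
            by_contra hne
            exact hn ⟨⟨by omega, by omega⟩, by simp only [decide_eq_true_eq]; omega⟩
      have hmem2 : ∀ y, 1 ≤ y → y ≤ N - 1 → ξ y = 1 →
          ((y = 1 ∨ ξ (y - 1) = 0) ↔ ¬ (y - 1) ∈ occR 1 (N - 1) ξ) := by
        intro y h1 h2 hy
        unfold occR
        rw [List.mem_filter, List.mem_range'_1]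
        constructor
        · rintro (rfl | hz) hc
          · obtain ⟨⟨hc1, hc2⟩, hc3⟩ := hc
            omega
          · obtain ⟨⟨hc1, hc2⟩, hc3⟩ := hc
            simp only [decide_eq_true_eq] at hc3
            omega
        · intro hn
          by_cases hy1 : y = 1
          · exact Or.inl hy1
          · right
            have h3 : 1 ≤ y - 1 := by omega
            have h4 := hbulk (y - 1) h3 (by omega)
            by_contra hne
            exact hn ⟨⟨by omega, by omega⟩, by simp only [decide_eq_true_eq]; omega⟩
      have hterm : ∀ y ∈ Finset.Icc 1 (N - 1),
          ((if ξ y = 1 ∧ (y = N - 1 ∨ ξ (y + 1) = 0) then Qp N ωL ωR ξ y else 0)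
            - (if ξ y = 1 ∧ (y = 1 ∨ ξ (y - 1) = 0) then Qp N ωL ωR ξ y else 0))
          = (if ξ y = 1 then
              (((if (y + 1) ∈ occR 1 (N - 1) ξ then (0:ℝ) else 1)
                - (if (y - 1) ∈ occR 1 (N - 1) ξ then (0:ℝ) else 1)) * Qp N ωL ωR ξ y)
              else 0) := by
        intro y hy
        obtain ⟨hy1, hy2⟩ := Finset.mem_Icc.mp hy
        by_cases hyv : ξ y = 1
        · rw [if_pos hyv]
          have e1 : (if ξ y = 1 ∧ (y = N - 1 ∨ ξ (y + 1) = 0) then Qp N ωL ωR ξ y else 0)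
              = (if (y + 1) ∈ occR 1 (N - 1) ξ then (0:ℝ) else 1) * Qp N ωL ωR ξ y := by
            by_cases hm : (y + 1) ∈ occR 1 (N - 1) ξ
            · rw [if_pos hm, if_neg (fun c => (hmem1 y hy1 hy2 hyv).mp c.2 hm), zero_mul]
            · rw [if_neg hm, if_pos ⟨hyv, (hmem1 y hy1 hy2 hyv).mpr hm⟩, one_mul]
          have e2 : (if ξ y = 1 ∧ (y = 1 ∨ ξ (y - 1) = 0) then Qp N ωL ωR ξ y else 0)
              = (if (y - 1) ∈ occR 1 (N - 1) ξ then (0:ℝ) else 1) * Qp N ωL ωR ξ y := by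
            by_cases hm : (y - 1) ∈ occR 1 (N - 1) ξ
            · rw [if_pos hm, if_neg (fun c => (hmem2 y hy1 hy2 hyv).mp c.2 hm), zero_mul]
            · rw [if_neg hm, if_pos ⟨hyv, (hmem2 y hy1 hy2 hyv).mpr hm⟩, one_mul]
          rw [e1, e2]
          ring
        · rw [if_neg (fun c => hyv c.1), if_neg (fun c => hyv c.1), if_neg hyv]
          ring
      rw [Finset.sum_congr rfl hterm, ← Finset.sum_filter, filter_sum_eq N ξ, map_sum_range]
      have hbridge : ∀ i ∈ Finset.range (occR 1 (N - 1) ξ).length,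
          (((if ((occR 1 (N - 1) ξ).getD i 0 + 1) ∈ occR 1 (N - 1) ξ then (0:ℝ) else 1)
            - (if ((occR 1 (N - 1) ξ).getD i 0 - 1) ∈ occR 1 (N - 1) ξ then (0:ℝ) else 1))
              * Qp N ωL ωR ξ ((occR 1 (N - 1) ξ).getD i 0))
          = (((if ((occR 1 (N - 1) ξ).getD i 0 + 1) ∈ occR 1 (N - 1) ξ then (0:ℝ) else 1)
            - (if ((occR 1 (N - 1) ξ).getD i 0 - 1) ∈ occR 1 (N - 1) ξ then (0:ℝ) else 1))
              * Pfun (hFun N ωL ωR) (hFun N ωL ωR N) (occR 1 (N - 1) ξ) i) := by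
        intro i hi
        rw [Qp_eq_Pfun N hN ωL ωR ξ i (Finset.mem_range.mp hi)]
      rw [Finset.sum_congr rfl hbridge]
      refine key_cancel (hFun N ωL ωR) (hFun N ωL ωR N) (occR 1 (N - 1) ξ) ?_ ?_ ?_ ?_
      · exact List.isChain_iff_pairwise.mpr ((List.pairwise_lt_range' (s := 1) (n := N - 1)).filter _)
      · intro y hy
        unfold occR at hy
        rw [List.mem_filter, List.mem_range'_1] at hy
        exact hy.1.1
      · intro j hj1 hj2
        have hjl : j < (occR 1 (N - 1) ξ).length := by omega
        have hmemj : (occR 1 (N - 1) ξ).getD j 0 ∈ occR 1 (N - 1) ξ := by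
          rw [List.getD_eq_getElem _ 0 hjl]
          exact List.getElem_mem hjl
        have hmemj1 : (occR 1 (N - 1) ξ).getD (j + 1) 0 ∈ occR 1 (N - 1) ξ := by
          rw [List.getD_eq_getElem _ 0 hj1]
          exact List.getElem_mem hj1
        have hbj := occ_mem_bounds N ξ _ hmemj
        have hbj1 := occ_mem_bounds N ξ _ hmemj1
        rw [hj2]
        refine hFun_step N ωL ωR _ hN hbj.1 ?_
        have := hbj1.2.1
        omega
      · intro i hi
        have hlen : (occR 1 (N - 1) ξ).length ≤ N - 1 := occR_length_le _ _ _
        exact ne_of_gt (hFun_D_sub_pos N ωL ωR hN hωL hωR i (by omega))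
    linarith [eR, eL, efin]
end
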